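/- Side-decision lemma: let ι be a nonempty finite index set, q : ι → ℝ², f : ι → ℝ, F(x) = max_{i ∈ ι} (dist(x, q_i) + f_i), let u ∈ ℝ² with u ≠ 0, and let c ∈ ℝ². Assume (1) c minimizes F on the line L = {y : ⟨y − c, u⟩ = 0}, i.e., F(c) ≤ F(y) for all y with ⟨y − c, u⟩ = 0; and (2) every index i with dist(c, q_i) + f_i = F(c) satisfies ⟨q_i − c, u⟩ > 0. Then every global minimizer x* of F (i.e., every x* with F(x*) ≤ F(x) for all x) satisfies ⟨x* − c, u⟩ > 0. (This justifies deciding, from the constrained center on a chord and the directions to its farthest neighbors, on which side of the chord the geodesic center lies.) -/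
import Mathlib


open scoped RealInnerProductSpace

/-- Side-decision lemma: if `c` minimizes `F` on the line `{y : ⟪y - c, u⟫ = 0}` and
every farthest index at `c` satisfies `⟪q i - c, u⟫ > 0`, then every global minimizer
`x*` of `F` satisfies `⟪x* - c, u⟫ > 0`. -/
theorem side_decision {ι : Type*} [Fintype ι] [Nonempty ι]
    (q : ι → EuclideanSpace ℝ (Fin 2)) (f : ι → ℝ)
    (F : EuclideanSpace ℝ (Fin 2) → ℝ)
    (hF : ∀ x, F x = Finset.univ.sup' Finset.univ_nonempty fun i => dist x (q i) + f i)
    (u c : EuclideanSpace ℝ (Fin 2)) (hu : u ≠ 0)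
    (hmin : ∀ y : EuclideanSpace ℝ (Fin 2), ⟪y - c, u⟫ = 0 → F c ≤ F y)
    (hactive : ∀ i, dist c (q i) + f i = F c → 0 < ⟪q i - c, u⟫) :
    ∀ x : EuclideanSpace ℝ (Fin 2), (∀ y, F x ≤ F y) → 0 < ⟪x - c, u⟫ := by
  have hunorm : (0:ℝ) < ‖u‖ := norm_pos_iff.mpr hu
  -- every term is at most F
  have hterm : ∀ z i, dist z (q i) + f i ≤ F z := by
    intro z i
    rw [hF]
    exact Finset.le_sup' (fun j => dist z (q j) + f j) (Finset.mem_univ i)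
  -- convexity of F
  have hconv : ∀ (a b : ℝ) (x y : EuclideanSpace ℝ (Fin 2)), 0 ≤ a → 0 ≤ b → a + b = 1 →
      F (a • x + b • y) ≤ a * F x + b * F y := by
    intro a b x y ha hb hab
    rw [hF]
    apply Finset.sup'_le
    intro i _
    have hd : dist (a • x + b • y) (q i) ≤ a * dist x (q i) + b * dist y (q i) :=
      (convexOn_dist (q i) convex_univ).2 (Set.mem_univ x) (Set.mem_univ y) ha hb hab
    have h1 : a * dist x (q i) + a * f i ≤ a * F x := by
      have h := mul_le_mul_of_nonneg_left (hterm x i) ha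
      rw [mul_add] at h; exact h
    have h2 : b * dist y (q i) + b * f i ≤ b * F y := by
      have h := mul_le_mul_of_nonneg_left (hterm y i) hb
      rw [mul_add] at h; exact h
    have hfi : f i = a * f i + b * f i := by rw [← add_mul, hab, one_mul]
    linarith
  -- existence of a strictly better point in direction u
  have key : ∀ i, ∃ e : ℝ, 0 < e ∧ ∀ t : ℝ, 0 < t → t ≤ e →
      dist (c + t • u) (q i) + f i < F c := by
    intro i
    by_cases h : dist c (q i) + f i = F c
    · -- active index
      have hs : 0 < ⟪q i - c, u⟫ := hactive i h
      refine ⟨⟪q i - c, u⟫ / ‖u‖ ^ 2, by positivity, ?_⟩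
      intro t ht hte
      have htu : t * ‖u‖ ^ 2 ≤ ⟪q i - c, u⟫ := by
        rw [le_div_iff₀ (by positivity)] at hte
        exact hte
      have hsq : ‖(c - q i) + t • u‖ ^ 2 < ‖c - q i‖ ^ 2 := by
        have hexp : ‖(c - q i) + t • u‖ ^ 2 =
            ‖c - q i‖ ^ 2 + 2 * ⟪c - q i, t • u⟫ + ‖t • u‖ ^ 2 := norm_add_sq_real _ _
        have hip : ⟪c - q i, t • u⟫ = t * ⟪c - q i, u⟫ := real_inner_smul_right _ _ _
        have hneg : ⟪c - q i, u⟫ = -⟪q i - c, u⟫ := by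
          rw [← inner_neg_left, neg_sub]
        have hns : ‖t • u‖ ^ 2 = t ^ 2 * ‖u‖ ^ 2 := by
          rw [norm_smul, mul_pow, Real.norm_eq_abs, sq_abs]
        rw [hexp, hip, hneg, hns]
        nlinarith [mul_pos ht hs, mul_le_mul_of_nonneg_left htu ht.le]
      have hdist : dist (c + t • u) (q i) < dist c (q i) := by
        rw [dist_eq_norm, dist_eq_norm]
        have : c + t • u - q i = (c - q i) + t • u := by abel
        rw [this]
        exact lt_of_pow_lt_pow_left₀ 2 (norm_nonneg _) hsq
      linarith [h]
    · -- inactive index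
      have hlt : dist c (q i) + f i < F c := lt_of_le_of_ne (hterm c i) h
      refine ⟨(F c - (dist c (q i) + f i)) / (2 * ‖u‖),
        div_pos (by linarith) (by positivity), ?_⟩
      intro t ht hte
      have hbd : t * ‖u‖ ≤ (F c - (dist c (q i) + f i)) / 2 := by
        rw [le_div_iff₀ (by positivity)] at hte
        rw [le_div_iff₀ (by norm_num : (0:ℝ) < 2)]
        nlinarith
      have htri : dist (c + t • u) (q i) ≤ t * ‖u‖ + dist c (q i) := by
        calc dist (c + t • u) (q i) ≤ dist (c + t • u) c + dist c (q i) := dist_triangle _ _ _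
          _ = t * ‖u‖ + dist c (q i) := by
              rw [dist_eq_norm, add_sub_cancel_left, norm_smul, Real.norm_eq_abs,
                abs_of_pos ht]
      linarith
  choose e he1 he2 using key
  set t0 : ℝ := Finset.univ.inf' Finset.univ_nonempty e with ht0def
  have ht0 : 0 < t0 := by
    rw [ht0def, Finset.lt_inf'_iff]
    intro i _
    exact he1 i
  have hFp : F (c + t0 • u) < F c := by
    rw [hF (c + t0 • u)]
    rw [Finset.sup'_lt_iff]
    intro i _
    exact he2 i t0 ht0 (Finset.inf'_le e (Finset.mem_univ i))
  -- main argument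
  intro x hx
  by_contra hle
  push_neg at hle
  set p : EuclideanSpace ℝ (Fin 2) := c + t0 • u with hpdef
  have hgp : ⟪p - c, u⟫ = t0 * ‖u‖ ^ 2 := by
    rw [hpdef, add_sub_cancel_left, real_inner_smul_left, real_inner_self_eq_norm_sq]
  have hgp0 : 0 < ⟪p - c, u⟫ := by rw [hgp]; positivity
  set gx : ℝ := ⟪x - c, u⟫ with hgxdef
  set gp : ℝ := ⟪p - c, u⟫ with hgpdef
  have hden : 0 < gp - gx := by linarith
  set l : ℝ := gp / (gp - gx) with hldef
  have hl0 : 0 < l := div_pos hgp0 hden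
  have hl1 : l ≤ 1 := by
    rw [hldef, div_le_one hden]; linarith
  set z : EuclideanSpace ℝ (Fin 2) := l • x + (1 - l) • p with hzdef
  have hz0 : ⟪z - c, u⟫ = 0 := by
    have hzc : z - c = l • (x - c) + (1 - l) • (p - c) := by
      rw [hzdef]; module
    rw [hzc, inner_add_left, real_inner_smul_left, real_inner_smul_left,
      ← hgxdef, ← hgpdef, hldef]
    field_simp
    ring
  have hFz : F c ≤ F z := hmin z hz0
  have hFzc : F z ≤ l * F x + (1 - l) * F p :=
    hconv l (1 - l) x p hl0.le (by linarith) (by ring)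
  have hFx : F x < F c := lt_of_le_of_lt (hx p) hFp
  have h1 : l * F x < l * F c := mul_lt_mul_of_pos_left hFx hl0
  have h2 : (1 - l) * F p ≤ (1 - l) * F c :=
    mul_le_mul_of_nonneg_left hFp.le (by linarith)
  have h3 : l * F c + (1 - l) * F c = F c := by ring
  linarith
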